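/- arXiv:1209.5229 — 3 statements merged into one kernel-verified Lean document; each statement's English description precedes it below -/
import Mathlib

section
/- Every group acting faithfully on the real line by orientation-preserving homeomorphisms is left-orderable. -/
/-- Every group acting faithfully on the real line by orientation-preserving
homeomorphisms is left-orderable.  Orientation-preserving homeomorphisms of `ℝ` are exactly
the strictly increasing bijections `ℝ → ℝ` (continuity of such maps and their inverses is
automatic), i.e. the order-isomorphisms `ℝ ≃o ℝ`.  Left-orderable means: there is a linear
order on `G` invariant under left multiplication. -/
theorem stmt3 (G : Type*) [Group G] (ρ : G →* (ℝ ≃o ℝ))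
    (hfaithful : Function.Injective ρ) :
    ∃ lo : LinearOrder G, ∀ g a b : G, lo.le a b → lo.le (g * a) (g * b) := by
  classical
  let e : ℕ ≃ ℚ := (Denumerable.eqv ℚ).symm
  let F : G → Lex (ℕ → ℝ) := fun g => toLex fun n => ρ g (e n : ℝ)
  have hinj : Function.Injective F := by
    intro a b hab
    apply hfaithful
    have hq : ∀ q : ℚ, ρ a (q : ℝ) = ρ b (q : ℝ) := by
      intro q
      have := congrFun (congrArg ofLex hab) (e.symm q)
      simpa [F, e.apply_symm_apply] using this
    have hfun : ((ρ a : ℝ ≃o ℝ) : ℝ → ℝ) = ((ρ b : ℝ ≃o ℝ) : ℝ → ℝ) := by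
      apply Continuous.ext_on Rat.denseRange_cast
      · exact (ρ a).toHomeomorph.continuous
      · exact (ρ b).toHomeomorph.continuous
      · rintro _ ⟨q, rfl⟩; exact hq q
    ext x
    exact congrFun hfun x
  refine ⟨LinearOrder.lift' F hinj, ?_⟩
  intro g a b hab
  have hab' : F a ≤ F b := hab
  show F (g * a) ≤ F (g * b)
  rcases hab'.lt_or_eq with hlt | heq
  · obtain ⟨i, hj, hi⟩ := hlt
    refine le_of_lt ⟨i, fun j hji => ?_, ?_⟩
    · show ρ (g * a) (e j : ℝ) = ρ (g * b) (e j : ℝ)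
      have : ρ a (e j : ℝ) = ρ b (e j : ℝ) := hj j hji
      simp only [map_mul]
      exact congrArg (ρ g) this
    · show ρ (g * a) (e i : ℝ) < ρ (g * b) (e i : ℝ)
      simp only [map_mul]
      exact (ρ g).strictMono hi
  · exact le_of_eq (by
      have : a = b := hinj heq
      rw [this])
end

section
/- Let J be a group and suppose there is a mean on J ∖ {e} invariant under a co-amenable subgroup K ≤ J. Then J is inner amenable, i.e., there is a conjugation-invariant mean on J ∖ {e}. -/
namespace Stmt16Aux

variable {X : Type*} {μ : Set X → ℝ}

/-- A finitely additive probability measure on all subsets of `X`. -/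
structure IsFA (μ : Set X → ℝ) : Prop where
  univ : μ Set.univ = 1
  nonneg : ∀ A, 0 ≤ μ A
  add : ∀ A B : Set X, Disjoint A B → μ (A ∪ B) = μ A + μ B

lemma IsFA.empty (h : IsFA μ) : μ ∅ = 0 := by
  have h2 := h.add ∅ ∅ (by simp)
  simp at h2
  linarith

lemma IsFA.finsetSum (h : IsFA μ) {ι : Type*} (s : Finset ι) (A : ι → Set X)
    (hd : ∀ i ∈ s, ∀ j ∈ s, i ≠ j → Disjoint (A i) (A j)) :
    μ (⋃ i ∈ s, A i) = ∑ i ∈ s, μ (A i) := by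
  classical
  induction s using Finset.induction with
  | empty => simpa using h.empty
  | @insert a s ha ih =>
    rw [Finset.set_biUnion_insert, Finset.sum_insert ha, h.add, ih]
    · intro i hi j hj hij
      exact hd i (Finset.mem_insert_of_mem hi) j (Finset.mem_insert_of_mem hj) hij
    · rw [Set.disjoint_iUnion₂_right]
      intro i hi
      exact hd a (Finset.mem_insert_self a s) i (Finset.mem_insert_of_mem hi)
        (fun hcontra => ha (hcontra ▸ hi))

lemma IsFA.fintypeSum (h : IsFA μ) {ι : Type*} [Fintype ι] (A : ι → Set X)
    (hd : ∀ i j : ι, i ≠ j → Disjoint (A i) (A j)) :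
    μ (⋃ i, A i) = ∑ i, μ (A i) := by
  have := h.finsetSum Finset.univ A (fun i _ j _ hij => hd i j hij)
  simpa using this

/-- Key comparison lemma: a pointwise nonnegative simple function has nonnegative
integral against a finitely additive probability measure. -/
lemma IsFA.simple_nonneg (h : IsFA μ) {ι : Type*} [Fintype ι]
    (c : ι → ℝ) (A : ι → Set X)
    (hpt : ∀ x, 0 ≤ ∑ i, Set.indicator (A i) (fun _ => c i) x) :
    0 ≤ ∑ i, c i * μ (A i) := by
  classical
  set atom : Finset ι → Set X := fun S => {x | ∀ i, x ∈ A i ↔ i ∈ S} with hatom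
  have hdisj : ∀ S T : Finset ι, S ≠ T → Disjoint (atom S) (atom T) := by
    intro S T hST
    rw [Set.disjoint_left]
    intro x hxS hxT
    exact hST (by ext i; rw [← hxS i, ← hxT i])
  have hcover : ∀ x : X, x ∈ atom (Finset.univ.filter (fun i => x ∈ A i)) := by
    intro x i
    simp
  have hAdec : ∀ i, μ (A i) = ∑ S : Finset ι, μ (atom S ∩ A i) := by
    intro i
    have hd2 : ∀ S T : Finset ι, S ≠ T → Disjoint (atom S ∩ A i) (atom T ∩ A i) :=
      fun S T hST => ((hdisj S T hST).mono Set.inter_subset_left Set.inter_subset_left)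
    have hun : (⋃ S : Finset ι, (atom S ∩ A i)) = A i := by
      apply Set.Subset.antisymm
      · exact Set.iUnion_subset (fun S => Set.inter_subset_right)
      · intro x hx
        exact Set.mem_iUnion.2 ⟨_, hcover x, hx⟩
    conv_lhs => rw [← hun]
    exact h.fintypeSum _ hd2
  calc (0:ℝ) ≤ ∑ S : Finset ι, ∑ i, c i * μ (atom S ∩ A i) := by
        apply Finset.sum_nonneg
        intro S _
        by_cases hS : (atom S).Nonempty
        · obtain ⟨x, hx⟩ := hS
          have hint : ∀ i, atom S ∩ A i = if i ∈ S then atom S else ∅ := by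
            intro i
            by_cases hi : i ∈ S
            · simp only [hi, if_true]
              apply Set.Subset.antisymm Set.inter_subset_left
              intro y hy
              exact ⟨hy, (hy i).2 hi⟩
            · simp only [hi, if_false]
              rw [Set.eq_empty_iff_forall_notMem]
              rintro y ⟨hy1, hy2⟩
              exact hi ((hy1 i).1 hy2)
          have hsum : ∑ i, c i * μ (atom S ∩ A i) = (∑ i ∈ S, c i) * μ (atom S) := by
            rw [Finset.sum_mul]
            rw [← Finset.sum_filter_add_sum_filter_not Finset.univ (fun i => i ∈ S)]
            have h1 : ∀ i ∈ Finset.univ.filter (fun i => i ∈ S),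
                c i * μ (atom S ∩ A i) = c i * μ (atom S) := by
              intro i hi
              simp only [Finset.mem_filter] at hi
              rw [hint i, if_pos hi.2]
            have h2 : ∀ i ∈ Finset.univ.filter (fun i => ¬ i ∈ S),
                c i * μ (atom S ∩ A i) = 0 := by
              intro i hi
              simp only [Finset.mem_filter] at hi
              rw [hint i, if_neg hi.2, h.empty, mul_zero]
            rw [Finset.sum_congr rfl h1, Finset.sum_congr rfl h2,
              Finset.sum_const_zero, add_zero]
            congr 1
            ext i; simp
          rw [hsum]
          apply mul_nonneg _ (h.nonneg _)
          have := hpt x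
          have heq : ∀ i, Set.indicator (A i) (fun _ => c i) x
              = if i ∈ S then c i else 0 := by
            intro i
            by_cases hi : i ∈ S
            · rw [Set.indicator_of_mem ((hx i).2 hi), if_pos hi]
            · rw [Set.indicator_of_notMem (fun hmem => hi ((hx i).1 hmem)), if_neg hi]
          rw [Finset.sum_congr rfl (fun i _ => heq i)] at this
          rwa [Finset.sum_ite_mem, Finset.univ_inter] at this
        · rw [Set.not_nonempty_iff_eq_empty] at hS
          apply Finset.sum_nonneg
          intro i _
          have : atom S ∩ A i = ∅ := by rw [hS]; simp
          rw [this, h.empty, mul_zero]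
    _ = ∑ i, c i * μ (A i) := by
        rw [Finset.sum_comm]
        apply Finset.sum_congr rfl
        intro i _
        rw [hAdec i, Finset.mul_sum]

lemma indicator_neg' (s : Set X) (a : ℝ) (x : X) :
    Set.indicator s (fun _ => -a) x = - Set.indicator s (fun _ => a) x := by
  by_cases hx : x ∈ s <;> simp [hx]

/-- Comparison of simple-function integrals. -/
lemma IsFA.simple_le (h : IsFA μ) {ι κ : Type*} [Fintype ι] [Fintype κ]
    (c : ι → ℝ) (A : ι → Set X) (d : κ → ℝ) (B : κ → Set X)
    (hpt : ∀ x, ∑ i, Set.indicator (A i) (fun _ => c i) x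
      ≤ ∑ j, Set.indicator (B j) (fun _ => d j) x) :
    ∑ i, c i * μ (A i) ≤ ∑ j, d j * μ (B j) := by
  have key := h.simple_nonneg (Sum.elim (fun i => -(c i)) d) (Sum.elim A B) ?_
  · rw [Fintype.sum_sum_type] at key
    simp only [Sum.elim_inl, Sum.elim_inr, neg_mul] at key
    rw [Finset.sum_neg_distrib] at key
    linarith
  · intro x
    rw [Fintype.sum_sum_type]
    simp only [Sum.elim_inl, Sum.elim_inr]
    have : ∀ i : ι, Set.indicator (A i) (fun _ => -(c i)) x
        = - Set.indicator (A i) (fun _ => c i) x := fun i => indicator_neg' _ _ _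
    rw [Finset.sum_congr rfl (fun i _ => this i), Finset.sum_neg_distrib]
    have := hpt x
    linarith

/-- The set of values of upper simple sums dominating `f`. -/
def USet (μ : Set X → ℝ) (f : X → ℝ) : Set ℝ :=
  {r | ∃ (n : ℕ) (c : Fin n → ℝ) (A : Fin n → Set X),
    (∀ x, f x ≤ ∑ i, Set.indicator (A i) (fun _ => c i) x) ∧ r = ∑ i, c i * μ (A i)}

/-- The upper integral of `f` against `μ`. -/
noncomputable def upInt (μ : Set X → ℝ) (f : X → ℝ) : ℝ := sInf (USet μ f)

lemma const_mem_USet (h : IsFA μ) {f : X → ℝ} {b : ℝ} (hub : ∀ x, f x ≤ b) :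
    b ∈ USet μ f := by
  refine ⟨1, fun _ => b, fun _ => Set.univ, ?_, ?_⟩
  · intro x
    simpa using hub x
  · simp [h.univ]

lemma le_of_mem_USet (h : IsFA μ) {f : X → ℝ} {a : ℝ} (hlb : ∀ x, a ≤ f x)
    {r : ℝ} (hr : r ∈ USet μ f) : a ≤ r := by
  obtain ⟨n, c, A, hpt, rfl⟩ := hr
  have := h.simple_le (fun _ : Fin 1 => a) (fun _ => Set.univ) c A ?_
  · simpa [h.univ] using this
  · intro x
    simp only [Fin.sum_univ_one, Set.indicator_univ]
    exact le_trans (hlb x) (hpt x)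

lemma bddBelow_USet (h : IsFA μ) {f : X → ℝ} {a : ℝ} (hlb : ∀ x, a ≤ f x) :
    BddBelow (USet μ f) :=
  ⟨a, fun _ hr => le_of_mem_USet h hlb hr⟩

lemma upInt_le (h : IsFA μ) {f : X → ℝ} {a : ℝ} (hlb : ∀ x, a ≤ f x)
    {r : ℝ} (hr : r ∈ USet μ f) : upInt μ f ≤ r :=
  csInf_le (bddBelow_USet h hlb) hr

lemma le_upInt (h : IsFA μ) {f : X → ℝ} {a b : ℝ} (hlb : ∀ x, a ≤ f x)
    (hub : ∀ x, f x ≤ b) : a ≤ upInt μ f :=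
  le_csInf ⟨b, const_mem_USet h hub⟩ (fun _ hr => le_of_mem_USet h hlb hr)

lemma upInt_const (h : IsFA μ) (b : ℝ) : upInt μ (fun _ => b) = b :=
  le_antisymm (upInt_le h (fun _ => le_refl b) (const_mem_USet h (fun _ => le_refl b)))
    (le_upInt h (fun _ => le_refl b) (fun _ => le_refl b))

/-- Subadditivity of the upper integral. -/
lemma upInt_add_le (h : IsFA μ) {f g : X → ℝ} {a b : ℝ}
    (hfl : ∀ x, a ≤ f x) (hfu : ∀ x, f x ≤ b)
    (hgl : ∀ x, a ≤ g x) (hgu : ∀ x, g x ≤ b) :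
    upInt μ (fun x => f x + g x) ≤ upInt μ f + upInt μ g := by
  have key : ∀ r ∈ USet μ f, ∀ s ∈ USet μ g, r + s ∈ USet μ (fun x => f x + g x) := by
    rintro r ⟨n, c, A, hc, rfl⟩ s ⟨m, d, B, hd, rfl⟩
    refine ⟨n + m, Fin.append c d, Fin.append A B, ?_, ?_⟩
    · intro x
      rw [Fin.sum_univ_add]
      simp only [Fin.append_left, Fin.append_right]
      exact add_le_add (hc x) (hd x)
    · rw [Fin.sum_univ_add]
      simp only [Fin.append_left, Fin.append_right]
  have hbdd : BddBelow (USet μ (fun x => f x + g x)) :=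
    bddBelow_USet h (a := a + a) (fun x => add_le_add (hfl x) (hgl x))
  have hne_g : (USet μ g).Nonempty := ⟨b, const_mem_USet h hgu⟩
  have hne_f : (USet μ f).Nonempty := ⟨b, const_mem_USet h hfu⟩
  show sInf (USet μ (fun x => f x + g x)) ≤ sInf (USet μ f) + sInf (USet μ g)
  have h1 : ∀ r ∈ USet μ f, sInf (USet μ (fun x => f x + g x)) - r ≤ sInf (USet μ g) := by
    intro r hr
    apply le_csInf hne_g
    intro s hs
    have := csInf_le hbdd (key r hr s hs)
    linarith
  have h2 : sInf (USet μ (fun x => f x + g x)) - sInf (USet μ g) ≤ sInf (USet μ f) := by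
    apply le_csInf hne_f
    intro r hr
    linarith [h1 r hr]
  linarith

/-- For a bounded function, the upper integrals of `f` and `-f` sum to zero
(upper and lower integrals agree). -/
lemma upInt_add_neg_self (h : IsFA μ) {f : X → ℝ} {a b : ℝ} (hab : a < b)
    (hlb : ∀ x, a ≤ f x) (hub : ∀ x, f x < b) :
    upInt μ f + upInt μ (fun x => - f x) = 0 := by
  have hnlb : ∀ x, -b ≤ -f x := fun x => by linarith [hub x]
  have hnub : ∀ x, -f x ≤ -a := fun x => by linarith [hlb x]
  have hub' : ∀ x, f x ≤ b := fun x => le_of_lt (hub x)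
  have hge : 0 ≤ upInt μ f + upInt μ (fun x => - f x) := by
    have h0 : (fun x => f x + - f x) = (fun _ : X => (0:ℝ)) := by funext x; ring
    have hsub := upInt_add_le h (a := min a (-b)) (b := max b (-a))
      (f := f) (g := fun x => - f x)
      (fun x => le_trans (min_le_left _ _) (hlb x))
      (fun x => le_trans (hub' x) (le_max_left _ _))
      (fun x => le_trans (min_le_right _ _) (hnlb x))
      (fun x => le_trans (hnub x) (le_max_right _ _))
    rw [h0, upInt_const h] at hsub
    linarith
  have hle : ∀ n : ℕ, 0 < n → upInt μ f + upInt μ (fun x => - f x) ≤ (b - a) / n := by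
    intro n hn
    have hn0 : (0:ℝ) < n := by exact_mod_cast hn
    set ε : ℝ := (b - a) / n with hε
    have hε0 : 0 < ε := div_pos (by linarith) hn0
    have hnε : (n:ℝ) * ε = b - a := by
      rw [hε]; field_simp
    set B : Fin n → Set X :=
      fun j => {x | a + (j.val:ℝ) * ε ≤ f x ∧ f x < a + ((j.val:ℝ)+1) * ε} with hB
    have hidx : ∀ x : X, ∃ j : Fin n, x ∈ B j := by
      intro x
      have ht0 : 0 ≤ (f x - a) / ε := div_nonneg (by linarith [hlb x]) (le_of_lt hε0)
      have htn : (f x - a) / ε < n := by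
        rw [div_lt_iff₀ hε0, hnε]
        linarith [hub x]
      set z : ℤ := ⌊(f x - a)/ε⌋ with hz
      have hz0 : 0 ≤ z := Int.le_floor.2 (by exact_mod_cast ht0)
      have hzn : z < n := Int.floor_lt.2 (by exact_mod_cast htn)
      have hjz : (z.toNat : ℤ) = z := Int.toNat_of_nonneg hz0
      have hj : z.toNat < n := by omega
      have hcast : ((z.toNat : ℕ) : ℝ) = (z : ℝ) := by exact_mod_cast congrArg Int.cast hjz
      refine ⟨⟨z.toNat, hj⟩, ?_, ?_⟩
      · have h1 : (z:ℝ) ≤ (f x - a)/ε := Int.floor_le _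
        rw [le_div_iff₀ hε0] at h1
        simp only [hcast]
        linarith
      · have h2 : (f x - a)/ε < z + 1 := Int.lt_floor_add_one _
        rw [div_lt_iff₀ hε0] at h2
        simp only [hcast]
        linarith
    choose idx hmem using hidx
    have hsep : ∀ i j : Fin n, i ≠ j → Disjoint (B i) (B j) := by
      intro i j hij
      rw [Set.disjoint_left]
      rintro x ⟨hi1, hi2⟩ ⟨hj1, hj2⟩
      have h1 : ((i.val:ℝ)) * ε < ((j.val:ℝ)+1) * ε := by linarith
      have h2 : ((j.val:ℝ)) * ε < ((i.val:ℝ)+1) * ε := by linarith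
      have h1' : (i.val:ℝ) < (j.val:ℝ)+1 := (mul_lt_mul_iff_of_pos_right hε0).1 h1
      have h2' : (j.val:ℝ) < (i.val:ℝ)+1 := (mul_lt_mul_iff_of_pos_right hε0).1 h2
      have h1n : i.val < j.val + 1 := by exact_mod_cast h1'
      have h2n : j.val < i.val + 1 := by exact_mod_cast h2'
      exact hij (Fin.ext (by omega))
    have hcoverU : (⋃ j, B j) = Set.univ :=
      Set.eq_univ_of_forall (fun x => Set.mem_iUnion.2 ⟨idx x, hmem x⟩)
    have hsum1 : ∑ j, μ (B j) = 1 := by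
      rw [← h.fintypeSum B hsep, hcoverU, h.univ]
    have hpt : ∀ (c : Fin n → ℝ) (x : X),
        ∑ j, Set.indicator (B j) (fun _ => c j) x = c (idx x) := by
      intro c x
      rw [Finset.sum_eq_single (idx x)]
      · exact Set.indicator_of_mem (hmem x) _
      · intro j _ hj
        apply Set.indicator_of_notMem
        intro hx
        exact (Set.disjoint_left.1 (hsep j (idx x) hj)) hx (hmem x)
      · intro hj; exact absurd (Finset.mem_univ _) hj
    have hup : upInt μ f ≤ ∑ j, (a + ((j.val:ℝ)+1) * ε) * μ (B j) := by
      apply upInt_le h hlb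
      refine ⟨n, fun j => a + ((j.val:ℝ)+1) * ε, B, ?_, rfl⟩
      intro x
      rw [hpt]
      exact le_of_lt (hmem x).2
    have hdn : upInt μ (fun x => - f x) ≤ ∑ j, (-(a + (j.val:ℝ) * ε)) * μ (B j) := by
      apply upInt_le h hnlb
      refine ⟨n, fun j => -(a + (j.val:ℝ) * ε), B, ?_, rfl⟩
      intro x
      rw [hpt]
      have := (hmem x).1
      simp only [neg_le_neg_iff]
      linarith
    have hεsum : ∑ j, (a + ((j.val:ℝ)+1) * ε) * μ (B j)
        + ∑ j, (-(a + (j.val:ℝ) * ε)) * μ (B j) = ε := by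
      rw [← Finset.sum_add_distrib]
      have hterm : ∀ j : Fin n, (a + ((j.val:ℝ)+1) * ε) * μ (B j)
          + (-(a + (j.val:ℝ) * ε)) * μ (B j) = ε * μ (B j) := by intro j; ring
      rw [Finset.sum_congr rfl (fun j _ => hterm j), ← Finset.mul_sum, hsum1, mul_one]
    linarith
  by_contra hne
  have hpos : 0 < upInt μ f + upInt μ (fun x => - f x) := lt_of_le_of_ne hge (Ne.symm hne)
  obtain ⟨n, hn⟩ := exists_nat_gt ((b - a) / (upInt μ f + upInt μ (fun x => - f x)))
  have hdivpos : 0 < (b - a) / (upInt μ f + upInt μ (fun x => - f x)) :=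
    div_pos (by linarith) hpos
  have hn0 : 0 < n := by exact_mod_cast lt_trans hdivpos hn
  have hkey := hle n hn0
  have hnR : (0:ℝ) < n := by exact_mod_cast hn0
  rw [div_lt_iff₀ hpos] at hn
  rw [le_div_iff₀ hnR] at hkey
  nlinarith

/-- Full additivity of the upper integral on bounded functions. -/
lemma upInt_add (h : IsFA μ) {f g : X → ℝ} {a b : ℝ} (hab : a < b)
    (hfl : ∀ x, a ≤ f x) (hfu : ∀ x, f x < b)
    (hgl : ∀ x, a ≤ g x) (hgu : ∀ x, g x < b) :
    upInt μ (fun x => f x + g x) = upInt μ f + upInt μ g := by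
  have hfu' : ∀ x, f x ≤ b := fun x => le_of_lt (hfu x)
  have hgu' : ∀ x, g x ≤ b := fun x => le_of_lt (hgu x)
  have hle := upInt_add_le h hfl hfu' hgl hgu'
  have hf0 := upInt_add_neg_self h hab hfl hfu
  have hg0 := upInt_add_neg_self h hab hgl hgu
  have hfg0 : upInt μ (fun x => f x + g x) + upInt μ (fun x => -(f x + g x)) = 0 :=
    upInt_add_neg_self h (show a + a < b + b by linarith)
      (f := fun x => f x + g x) (fun x => add_le_add (hfl x) (hgl x))
      (fun x => add_lt_add (hfu x) (hgu x))
  have hneg : upInt μ (fun x => -(f x + g x))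
      ≤ upInt μ (fun x => - f x) + upInt μ (fun x => - g x) := by
    have hkey := upInt_add_le h (a := -b) (b := -a)
      (f := fun x => - f x) (g := fun x => - g x)
      (fun x => by show -b ≤ -f x; linarith [hfu x])
      (fun x => by show -f x ≤ -a; linarith [hfl x])
      (fun x => by show -b ≤ -g x; linarith [hgu x])
      (fun x => by show -g x ≤ -a; linarith [hgl x])
    have heq : (fun x => - f x + - g x) = (fun x => -(f x + g x)) := by funext x; ring
    rwa [heq] at hkey
  linarith

/-- The upper integral is invariant under composition with a measure-preserving
bijection. -/
lemma upInt_comp_le (h : IsFA μ) (e : X ≃ X) (hinv : ∀ A : Set X, μ (⇑e ⁻¹' A) = μ A)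
    {f : X → ℝ} {a b : ℝ} (hlb : ∀ x, a ≤ f x) (hub : ∀ x, f x ≤ b) :
    upInt μ (fun x => f (e x)) ≤ upInt μ f := by
  have hgoal : ∀ r ∈ USet μ f, upInt μ (fun x => f (e x)) ≤ r := by
    rintro r ⟨n, c, A, hc, rfl⟩
    have hμeq : ∑ i, c i * μ (A i) = ∑ i, c i * μ (⇑e ⁻¹' A i) :=
      Finset.sum_congr rfl (fun i _ => by rw [hinv])
    rw [hμeq]
    apply upInt_le h (a := a) (fun x => hlb (e x))
    refine ⟨n, c, fun i => ⇑e ⁻¹' A i, ?_, rfl⟩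
    intro x
    have hind : ∀ i, Set.indicator (⇑e ⁻¹' A i) (fun _ => c i) x
        = Set.indicator (A i) (fun _ => c i) (e x) := by
      intro i
      by_cases hx : e x ∈ A i <;> simp [Set.indicator, Set.mem_preimage, hx]
    rw [Finset.sum_congr rfl (fun i _ => hind i)]
    exact hc (e x)
  exact le_csInf ⟨b, const_mem_USet h hub⟩ hgoal

lemma upInt_comp (h : IsFA μ) (e : X ≃ X) (hinv : ∀ A : Set X, μ (⇑e ⁻¹' A) = μ A)
    (hinv' : ∀ A : Set X, μ (⇑e.symm ⁻¹' A) = μ A)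
    {f : X → ℝ} {a b : ℝ} (hlb : ∀ x, a ≤ f x) (hub : ∀ x, f x ≤ b) :
    upInt μ (fun x => f (e x)) = upInt μ f := by
  apply le_antisymm (upInt_comp_le h e hinv hlb hub)
  have h2 := upInt_comp_le h e.symm hinv' (f := fun x => f (e x)) (a := a) (b := b)
    (fun x => hlb _) (fun x => hub _)
  have heq : (fun x => f (e (e.symm x))) = f := by
    funext x; rw [Equiv.apply_symm_apply]
  rwa [heq] at h2

end Stmt16Aux

/-- A mean on the complement of the identity in a group `J`: a finitely additive
probability measure on `J ∖ {e}` (formalized on all subsets of `J`, giving `{e}` measure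
zero and total mass one). -/
def IsMeanOffId {J : Type*} [Group J] (m : Set J → ℝ) : Prop :=
  m Set.univ = 1 ∧ m {(1 : J)} = 0 ∧ (∀ A : Set J, 0 ≤ m A) ∧
    ∀ A B : Set J, Disjoint A B → m (A ∪ B) = m A + m B

/-- Let `J` be a group, `K ≤ J` a co-amenable subgroup (there is a
`J`-invariant mean on `J/K`).  If there is a mean on `J ∖ {e}` invariant under conjugation
by elements of `K`, then `J` is inner amenable: there is a mean on `J ∖ {e}` invariant
under conjugation by every element of `J`. -/
theorem stmt16 (J : Type*) [Group J] (K : Subgroup J)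
    (hcoam : ∃ μ : Set (J ⧸ K) → ℝ,
      (μ Set.univ = 1 ∧ (∀ A, 0 ≤ μ A) ∧
        ∀ A B, Disjoint A B → μ (A ∪ B) = μ A + μ B) ∧
      ∀ (g : J) (A : Set (J ⧸ K)), μ ((fun x => g • x) '' A) = μ A)
    (hK : ∃ m : Set J → ℝ, IsMeanOffId m ∧
      ∀ k ∈ K, ∀ A : Set J, m ((fun x => k * x * k⁻¹) '' A) = m A) :
    ∃ m : Set J → ℝ, IsMeanOffId m ∧
      ∀ (g : J) (A : Set J), m ((fun x => g * x * g⁻¹) '' A) = m A := by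
  classical
  obtain ⟨μ, ⟨hμu, hμ0, hμa⟩, hμinv⟩ := hcoam
  obtain ⟨m, ⟨hmu, hm1, hm0, hma⟩, hminv⟩ := hK
  have hfa : Stmt16Aux.IsFA μ := ⟨hμu, hμ0, hμa⟩
  have hm_le : ∀ A : Set J, m A ≤ 1 := by
    intro A
    have h2 := hma A Aᶜ disjoint_compl_right
    rw [Set.union_compl_self, hmu] at h2
    have h3 := hm0 Aᶜ
    linarith
  -- the function on the quotient, with its defining property
  have fbar : ∀ A : Set J, { f : (J ⧸ K) → ℝ //
      ∀ g : J, f (QuotientGroup.mk g) = m ((fun x => g⁻¹ * x * g) '' A) } := by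
    intro A
    refine ⟨Quotient.lift (fun g => m ((fun x => g⁻¹ * x * g) '' A)) ?_, fun g => rfl⟩
    intro g₁ g₂ hrel
    have hk : g₁⁻¹ * g₂ ∈ K := QuotientGroup.leftRel_apply.1 hrel
    have hfun : (fun x => (g₁⁻¹*g₂)⁻¹ * x * (g₁⁻¹*g₂)) ∘ (fun x => g₁⁻¹ * x * g₁)
        = fun x => g₂⁻¹ * x * g₂ := by
      funext x; simp only [Function.comp_apply]; group
    have himg : (fun x => g₂⁻¹ * x * g₂) '' A
        = (fun x => (g₁⁻¹*g₂)⁻¹ * x * (g₁⁻¹*g₂)) '' ((fun x => g₁⁻¹ * x * g₁) '' A) := by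
      rw [← Set.image_comp, hfun]
    have hconj := hminv (g₁⁻¹*g₂)⁻¹ (inv_mem hk) ((fun x => g₁⁻¹ * x * g₁) '' A)
    simp only [inv_inv] at hconj
    show m ((fun x => g₁⁻¹ * x * g₁) '' A) = m ((fun x => g₂⁻¹ * x * g₂) '' A)
    rw [himg, hconj]
  have hfb0 : ∀ (A : Set J) (q : J ⧸ K), 0 ≤ (fbar A).1 q := by
    intro A q
    induction q using Quotient.ind with
    | _ g =>
      show 0 ≤ (fbar A).1 (QuotientGroup.mk g)
      rw [(fbar A).2 g]
      exact hm0 _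
  have hfb1 : ∀ (A : Set J) (q : J ⧸ K), (fbar A).1 q ≤ 1 := by
    intro A q
    induction q using Quotient.ind with
    | _ g =>
      show (fbar A).1 (QuotientGroup.mk g) ≤ 1
      rw [(fbar A).2 g]
      exact hm_le _
  refine ⟨fun A => Stmt16Aux.upInt μ ((fbar A).1), ⟨?_, ?_, ?_, ?_⟩, ?_⟩
  · -- total mass one
    have huniv : (fbar Set.univ).1 = fun _ => 1 := by
      funext q
      induction q using Quotient.ind with
      | _ g =>
        show (fbar Set.univ).1 (QuotientGroup.mk g) = 1
        rw [(fbar Set.univ).2 g]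
        rw [Set.image_univ_of_surjective (fun y => ⟨g * y * g⁻¹, by group⟩)]
        exact hmu
    show Stmt16Aux.upInt μ (fbar Set.univ).1 = 1
    rw [huniv, Stmt16Aux.upInt_const hfa]
  · -- identity has measure zero
    have hone : (fbar {(1:J)}).1 = fun _ => 0 := by
      funext q
      induction q using Quotient.ind with
      | _ g =>
        show (fbar {(1:J)}).1 (QuotientGroup.mk g) = 0
        rw [(fbar {(1:J)}).2 g, Set.image_singleton]
        have : g⁻¹ * 1 * g = 1 := by group
        rw [this]
        exact hm1
    show Stmt16Aux.upInt μ (fbar {(1:J)}).1 = 0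
    rw [hone, Stmt16Aux.upInt_const hfa]
  · -- nonnegativity
    intro A
    exact Stmt16Aux.le_upInt hfa (hfb0 A) (hfb1 A)
  · -- finite additivity
    intro A B hAB
    have himg : (fbar (A ∪ B)).1 = fun q => (fbar A).1 q + (fbar B).1 q := by
      funext q
      induction q using Quotient.ind with
      | _ g =>
        show (fbar (A ∪ B)).1 (QuotientGroup.mk g)
          = (fbar A).1 (QuotientGroup.mk g) + (fbar B).1 (QuotientGroup.mk g)
        rw [(fbar (A ∪ B)).2 g, (fbar A).2 g, (fbar B).2 g, Set.image_union]
        refine hma _ _ (Set.disjoint_image_of_injective ?_ hAB)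
        intro x y hxy
        exact mul_left_cancel (mul_right_cancel hxy)
    show Stmt16Aux.upInt μ (fbar (A ∪ B)).1
      = Stmt16Aux.upInt μ (fbar A).1 + Stmt16Aux.upInt μ (fbar B).1
    rw [himg]
    exact Stmt16Aux.upInt_add hfa (show (0:ℝ) < 2 by norm_num)
      (hfb0 A) (fun q => lt_of_le_of_lt (hfb1 A q) one_lt_two)
      (hfb0 B) (fun q => lt_of_le_of_lt (hfb1 B q) one_lt_two)
  · -- conjugation invariance
    intro g A
    set e : (J ⧸ K) ≃ (J ⧸ K) :=
      ⟨fun q => g⁻¹ • q, fun q => g • q,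
        fun q => smul_inv_smul g q, fun q => inv_smul_smul g q⟩ with he
    have hepre : ∀ S : Set (J ⧸ K), ⇑e ⁻¹' S = (fun x => g • x) '' S := by
      intro S; ext q
      constructor
      · intro hq
        exact ⟨g⁻¹ • q, hq, smul_inv_smul g q⟩
      · rintro ⟨p, hp, rfl⟩
        show g⁻¹ • (g • p) ∈ S
        rwa [inv_smul_smul]
    have hepre' : ∀ S : Set (J ⧸ K), ⇑e.symm ⁻¹' S = (fun x => g⁻¹ • x) '' S := by
      intro S; ext q
      constructor
      · intro hq
        exact ⟨g • q, hq, inv_smul_smul g q⟩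
      · rintro ⟨p, hp, rfl⟩
        show g • (g⁻¹ • p) ∈ S
        rwa [smul_inv_smul]
    have hinv1 : ∀ S, μ (⇑e ⁻¹' S) = μ S := fun S => by rw [hepre]; exact hμinv g S
    have hinv2 : ∀ S, μ (⇑e.symm ⁻¹' S) = μ S := fun S => by rw [hepre']; exact hμinv g⁻¹ S
    have hcomp : (fbar ((fun x => g * x * g⁻¹) '' A)).1 = fun q => (fbar A).1 (e q) := by
      funext q
      induction q using Quotient.ind with
      | _ hh =>
        show (fbar ((fun x => g * x * g⁻¹) '' A)).1 (QuotientGroup.mk hh)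
          = (fbar A).1 (QuotientGroup.mk (g⁻¹ * hh))
        rw [(fbar _).2 hh, (fbar A).2 (g⁻¹ * hh)]
        have hfun : (fun x => hh⁻¹ * x * hh) ∘ (fun x => g * x * g⁻¹)
            = fun x => (g⁻¹ * hh)⁻¹ * x * (g⁻¹ * hh) := by
          funext x; simp only [Function.comp_apply]; group
        rw [← Set.image_comp, hfun]
    show Stmt16Aux.upInt μ (fbar ((fun x => g * x * g⁻¹) '' A)).1
      = Stmt16Aux.upInt μ (fbar A).1
    rw [hcomp]
    exact Stmt16Aux.upInt_comp hfa e hinv1 hinv2 (hfb0 A) (hfb1 A)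
end

section
/- The set of pairs (ξ₋, ξ₊) of repelling and attracting fixed points of hyperbolic elements of PSL(2,ℤ) is dense in ℙ¹(ℝ) × ℙ¹(ℝ) minus the diagonal. Equivalently, for any two disjoint non-empty open subsets U, V of ℙ¹(ℝ) there exists a hyperbolic element of PSL(2,ℤ) with repelling fixed point in U and attracting fixed point in V. -/
open Matrix

noncomputable instance : TopologicalSpace (Projectivization ℝ (Fin 2 → ℝ)) :=
  instTopologicalSpaceQuotient

lemma eigvec (M : Matrix (Fin 2) (Fin 2) ℝ) (lam : ℝ)
    (h : lam ^ 2 - M.trace * lam + M.det = 0) :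
    M.mulVec ![M 0 1, lam - M 0 0] = lam • ![M 0 1, lam - M 0 0] := by
  rw [Matrix.trace_fin_two] at h
  rw [Matrix.det_fin_two] at h
  funext i
  fin_cases i <;>
    simp [Matrix.mulVec, dotProduct, Fin.sum_univ_two] <;>
    first | linear_combination (0:ℝ) | linear_combination h | linear_combination -h

lemma open_pull (W : Set (Projectivization ℝ (Fin 2 → ℝ))) (hW : IsOpen W) {w : Fin 2 → ℝ}
    (h0 : w ≠ 0) (hw : Projectivization.mk ℝ w h0 ∈ W) :
    ∃ ε > 0, ∀ u : Fin 2 → ℝ, dist u w < ε → ∃ hu : u ≠ 0, Projectivization.mk ℝ u hu ∈ W := by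
  have hcont : Continuous (fun v : {v : Fin 2 → ℝ // v ≠ 0} =>
      Projectivization.mk ℝ v.1 v.2) := continuous_quotient_mk'
  set T : Set {v : Fin 2 → ℝ // v ≠ 0} :=
    (fun v : {v : Fin 2 → ℝ // v ≠ 0} => Projectivization.mk ℝ v.1 v.2) ⁻¹' W with hT
  have hTopen : IsOpen T := hW.preimage hcont
  have hmap : IsOpenMap (Subtype.val : {v : Fin 2 → ℝ // v ≠ 0} → (Fin 2 → ℝ)) := by
    have : IsOpen {v : Fin 2 → ℝ | v ≠ 0} := isOpen_compl_singleton
    exact this.isOpenMap_subtype_val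
  have hSopen : IsOpen (Subtype.val '' T) := hmap T hTopen
  have hwS : w ∈ Subtype.val '' T := ⟨⟨w, h0⟩, hw, rfl⟩
  rw [Metric.isOpen_iff] at hSopen
  obtain ⟨ε, hε, hball⟩ := hSopen w hwS
  refine ⟨ε, hε, fun u hu => ?_⟩
  have : u ∈ Subtype.val '' T := hball (by simpa [Metric.mem_ball] using hu)
  obtain ⟨⟨u', hu'⟩, hmem, rfl⟩ := this
  exact ⟨hu', hmem⟩

lemma rat_near (x : ℝ) {ε : ℝ} (hε : 0 < ε) : ∃ a : ℚ, a ≠ 0 ∧ |(a:ℝ) - x| < ε := by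
  obtain ⟨q1, h1, h2⟩ := exists_rat_btwn (show x < x + ε/2 by linarith)
  obtain ⟨q2, h3, h4⟩ := exists_rat_btwn (show (q1:ℝ) < x + ε by linarith)
  by_cases hq : q1 = 0
  · have hq2 : q2 ≠ 0 := by
      have h5 : q1 < q2 := by exact_mod_cast h3
      rw [hq] at h5; exact ne_of_gt h5
    refine ⟨q2, hq2, by rw [abs_lt]; constructor <;> nlinarith [h3, h4, h1]⟩
  · exact ⟨q1, hq, by rw [abs_lt]; constructor <;> nlinarith [h1, h2]⟩

lemma vec_ne_zero {p q : ℤ} (hp : p ≠ 0) : (![(p:ℝ), (q:ℝ)] : Fin 2 → ℝ) ≠ 0 := by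
  intro h
  have := congr_fun h 0
  simp at this
  exact hp (by exact_mod_cast this)

lemma int_point (W : Set (Projectivization ℝ (Fin 2 → ℝ))) (hW : IsOpen W) (hne : W.Nonempty) :
    ∃ p q : ℤ, p ≠ 0 ∧ q ≠ 0 ∧
      ∃ h : (![(p:ℝ), (q:ℝ)] : Fin 2 → ℝ) ≠ 0, Projectivization.mk ℝ ![(p:ℝ), (q:ℝ)] h ∈ W := by
  obtain ⟨x, hx⟩ := hne
  have hx' : Projectivization.mk ℝ x.rep x.rep_nonzero ∈ W := by
    rw [x.mk_rep]; exact hx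
  obtain ⟨ε, hε, hball⟩ := open_pull W hW x.rep_nonzero hx'
  obtain ⟨a, ha0, ha⟩ := rat_near (x.rep 0) hε
  obtain ⟨b, hb0, hb⟩ := rat_near (x.rep 1) hε
  have hdist : dist (![(a:ℝ), (b:ℝ)] : Fin 2 → ℝ) x.rep < ε := by
    rw [dist_pi_lt_iff hε]
    intro i
    fin_cases i
    · simpa [Real.dist_eq] using ha
    · simpa [Real.dist_eq] using hb
  obtain ⟨hu, hmem⟩ := hball _ hdist
  have hp : (a.num * b.den : ℤ) ≠ 0 :=
    mul_ne_zero (Rat.num_ne_zero.mpr ha0) (by exact_mod_cast b.den_nz)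
  have hq : (b.num * a.den : ℤ) ≠ 0 :=
    mul_ne_zero (Rat.num_ne_zero.mpr hb0) (by exact_mod_cast a.den_nz)
  refine ⟨a.num * b.den, b.num * a.den, hp, hq, vec_ne_zero hp, ?_⟩
  have heq : Projectivization.mk ℝ ![((a.num * b.den : ℤ):ℝ), ((b.num * a.den : ℤ):ℝ)]
      (vec_ne_zero hp) = Projectivization.mk ℝ ![(a:ℝ), (b:ℝ)] hu := by
    rw [Projectivization.mk_eq_mk_iff']
    refine ⟨((a.den : ℝ) * (b.den : ℝ)), ?_⟩
    funext i
    have hda : (a.den : ℝ) ≠ 0 := by exact_mod_cast a.den_nz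
    have hdb : (b.den : ℝ) ≠ 0 := by exact_mod_cast b.den_nz
    fin_cases i <;> simp [Rat.cast_def] <;> field_simp <;> ring
  rw [heq]; exact hmem

set_option maxHeartbeats 1000000 in
/-- The pairs of (repelling, attracting) fixed points of hyperbolic elements
of `PSL(2,ℤ)` are dense in `ℙ¹(ℝ) × ℙ¹(ℝ)` off the diagonal: for any two disjoint
non-empty open subsets `U, V` of `ℙ¹(ℝ)` there is a hyperbolic element of `PSL(2,ℤ)`
(a matrix `g ∈ SL(2,ℤ)` with `|trace g| > 2`) whose repelling fixed point (class of the
eigenvector with eigenvalue `λ⁻¹`, `|λ| > 1`) lies in `U` and whose attracting fixed point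
(class of the eigenvector with eigenvalue `λ`) lies in `V`. -/
theorem stmt18 (U V : Set (Projectivization ℝ (Fin 2 → ℝ)))
    (hU : IsOpen U) (hV : IsOpen V) (hUne : U.Nonempty) (hVne : V.Nonempty)
    (hdisj : U ∩ V = ∅) :
    ∃ g : Matrix (Fin 2) (Fin 2) ℤ, g.det = 1 ∧ 2 < |g.trace| ∧
      ∃ (vr va : Fin 2 → ℝ) (hvr : vr ≠ 0) (hva : va ≠ 0) (lam : ℝ),
        1 < |lam| ∧
        (g.map (Int.cast : ℤ → ℝ)).mulVec va = lam • va ∧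
        (g.map (Int.cast : ℤ → ℝ)).mulVec vr = lam⁻¹ • vr ∧
        Projectivization.mk ℝ vr hvr ∈ U ∧
        Projectivization.mk ℝ va hva ∈ V := by
  obtain ⟨p, q, hp0, hq0, hpq0, hpqV⟩ := int_point V hV hVne
  obtain ⟨r, s, hr0, hs0, hrs0, hrsU⟩ := int_point U hU hUne
  set d : ℤ := p * s - q * r with hd_def
  clear_value d
  have hd : d ≠ 0 := by
    intro h
    have hps : (p:ℝ) * s = (q:ℝ) * r := by
      have : p * s = q * r := by omega
      exact_mod_cast this
    have heq : Projectivization.mk ℝ ![(r:ℝ), (s:ℝ)] hrs0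
        = Projectivization.mk ℝ ![(p:ℝ), (q:ℝ)] hpq0 := by
      rw [Projectivization.mk_eq_mk_iff']
      refine ⟨(r:ℝ) / (p:ℝ), ?_⟩
      have hpr : (p:ℝ) ≠ 0 := by exact_mod_cast hp0
      funext i
      fin_cases i <;> simp <;> field_simp
      nlinarith [hps]
    have : Projectivization.mk ℝ ![(p:ℝ), (q:ℝ)] hpq0 ∈ U ∩ V := ⟨heq ▸ hrsU, hpqV⟩
    rw [hdisj] at this
    exact this
  -- real constants
  set Dr : ℝ := ((p:ℝ) * s - (q:ℝ) * r) with hDr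
  clear_value Dr
  have hDrd : Dr = (d:ℝ) := by rw [hDr, hd_def]; push_cast; ring
  have hDr1 : 1 ≤ Dr ^ 2 := by
    have h1 : 1 ≤ |d| := Int.one_le_abs hd
    have h2 : (1:ℤ) ≤ d ^ 2 := by nlinarith [sq_abs d]
    rw [hDrd]; exact_mod_cast h2
  have hP0 : (p:ℝ) ≠ 0 := by exact_mod_cast hp0
  have hR0 : (r:ℝ) ≠ 0 := by exact_mod_cast hr0
  have hDr0 : Dr ≠ 0 := by rw [hDrd]; exact_mod_cast hd
  -- scaled eigenvector curves
  set A : ℝ → ℝ := fun h => h * ((p:ℝ)^2 + (r:ℝ)^2) + Dr * p * r with hA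
  set B : ℝ → ℝ := fun h => h^2 - h * ((p:ℝ)*q + (r:ℝ)*s) - Dr * p * s with hB
  set T : ℝ → ℝ := fun h => 2*h^2 - Dr^2 with hT
  set Sq : ℝ → ℝ := fun h => Real.sqrt ((T h)^2 - 4*h^4) with hSq
  set Φa : ℝ → Fin 2 → ℝ := fun h => ![A h, (T h - Sq h)/2 - B h] with hΦa
  set Φr : ℝ → Fin 2 → ℝ := fun h => ![A h, (T h + Sq h)/2 - B h] with hΦr
  clear_value Φa Φr
  have hSq0 : Sq 0 = Dr^2 := by
    rw [hSq, hT]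
    simp
    exact Real.sqrt_sq (sq_nonneg Dr)
  have hΦa0 : Φa 0 = (Dr * r) • ![(p:ℝ), (q:ℝ)] := by
    funext i
    fin_cases i <;> simp [hΦa, hA, hB, hT, hSq0] <;> rw [hDr] <;> ring
  have hΦr0 : Φr 0 = (Dr * p) • ![(r:ℝ), (s:ℝ)] := by
    funext i
    fin_cases i <;> simp [hΦr, hA, hB, hT, hSq0] <;> rw [hDr] <;> ring
  have hwa0 : ((Dr * r) • ![(p:ℝ), (q:ℝ)] : Fin 2 → ℝ) ≠ 0 :=
    smul_ne_zero (mul_ne_zero hDr0 hR0) hpq0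
  have hwr0 : ((Dr * p) • ![(r:ℝ), (s:ℝ)] : Fin 2 → ℝ) ≠ 0 :=
    smul_ne_zero (mul_ne_zero hDr0 hP0) hrs0
  have hwaV : Projectivization.mk ℝ ((Dr * r) • ![(p:ℝ), (q:ℝ)]) hwa0 ∈ V := by
    have : Projectivization.mk ℝ ((Dr * r) • ![(p:ℝ), (q:ℝ)]) hwa0
        = Projectivization.mk ℝ ![(p:ℝ), (q:ℝ)] hpq0 :=
      (Projectivization.mk_eq_mk_iff' ℝ _ _ _ _).mpr ⟨Dr * r, rfl⟩
    rw [this]; exact hpqV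
  have hwrU : Projectivization.mk ℝ ((Dr * p) • ![(r:ℝ), (s:ℝ)]) hwr0 ∈ U := by
    have : Projectivization.mk ℝ ((Dr * p) • ![(r:ℝ), (s:ℝ)]) hwr0
        = Projectivization.mk ℝ ![(r:ℝ), (s:ℝ)] hrs0 :=
      (Projectivization.mk_eq_mk_iff' ℝ _ _ _ _).mpr ⟨Dr * p, rfl⟩
    rw [this]; exact hrsU
  obtain ⟨εV, hεV, hballV⟩ := open_pull V hV hwa0 hwaV
  obtain ⟨εU, hεU, hballU⟩ := open_pull U hU hwr0 hwrU
  have hcontA : Continuous Φa := by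
    rw [hΦa, hSq, hT, hA, hB]
    apply continuous_pi
    intro i
    fin_cases i <;> simp <;> fun_prop
  have hcontR : Continuous Φr := by
    rw [hΦr, hSq, hT, hA, hB]
    apply continuous_pi
    intro i
    fin_cases i <;> simp <;> fun_prop
  have hcaA := hcontA.continuousAt (x := 0)
  have hcaR := hcontR.continuousAt (x := 0)
  rw [Metric.continuousAt_iff] at hcaA hcaR
  obtain ⟨δV, hδV, hδVs⟩ := hcaA εV hεV
  obtain ⟨δU, hδU, hδUs⟩ := hcaR εU hεU
  obtain ⟨m, hm⟩ := exists_nat_gt (max (max (1/δV) (1/δU)) 3)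
  have hm3 : (3:ℝ) < m := lt_of_le_of_lt (le_max_right _ _) hm
  have hmpos : (0:ℝ) < m := by linarith
  have hmV : dist (1/(m:ℝ)) 0 < δV := by
    rw [Real.dist_eq, sub_zero, abs_of_pos (by positivity)]
    have h1 : 1/δV < m := lt_of_le_of_lt (le_trans (le_max_left _ _) (le_max_left _ _)) hm
    rw [div_lt_iff₀ hmpos]
    have h2 : δV * (1/δV) < δV * (m:ℝ) := (mul_lt_mul_iff_right₀ hδV).mpr h1
    rw [mul_one_div_cancel (ne_of_gt hδV)] at h2
    linarith
  have hmU : dist (1/(m:ℝ)) 0 < δU := by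
    rw [Real.dist_eq, sub_zero, abs_of_pos (by positivity)]
    have h1 : 1/δU < m := lt_of_le_of_lt (le_trans (le_max_right _ _) (le_max_left _ _)) hm
    rw [div_lt_iff₀ hmpos]
    have h2 : δU * (1/δU) < δU * (m:ℝ) := (mul_lt_mul_iff_right₀ hδU).mpr h1
    rw [mul_one_div_cancel (ne_of_gt hδU)] at h2
    linarith
  have hnearV : dist (Φa (1/(m:ℝ))) (Φa 0) < εV := hδVs hmV
  have hnearU : dist (Φr (1/(m:ℝ))) (Φr 0) < εU := hδUs hmU
  -- the integer matrix
  set n : ℤ := (m : ℤ) with hn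
  set g : Matrix (Fin 2) (Fin 2) ℤ :=
    !![1 - n*p*q - n*r*s - n^2*d*p*s, n*p^2 + n*r^2 + n^2*d*p*r;
       -(n*q^2) - n*s^2 - n^2*d*q*s, 1 + n*p*q + n*r*s + n^2*d*q*r] with hg
  have hdet : g.det = 1 := by
    rw [hg, Matrix.det_fin_two_of, hd_def]; ring
  have hn3 : (3:ℤ) ≤ n := by
    have : 3 < m := by exact_mod_cast hm3
    omega
  have hd2 : (1:ℤ) ≤ d^2 := by
    have h1 : 1 ≤ |d| := Int.one_le_abs hd
    nlinarith [sq_abs d]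
  have htr : g.trace = 2 - n^2 * d^2 := by
    rw [hg, Matrix.trace_fin_two_of, hd_def]; ring
  have htrabs : 2 < |g.trace| := by
    rw [htr, abs_of_nonpos (by nlinarith)]
    nlinarith
  -- real eigenvalue quantities
  set mr : ℝ := (m:ℝ) with hmr
  have hmr3 : (3:ℝ) ≤ mr := le_of_lt hm3
  have hmrpos : 0 < mr := by rw [hmr]; exact hmpos
  have hmr0 : mr ≠ 0 := ne_of_gt hmrpos
  set t : ℝ := 2 - mr^2 * Dr^2 with ht
  clear_value t
  have h9 : (9:ℝ) ≤ mr^2 := by nlinarith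
  have h10 : (9:ℝ) ≤ mr^2 * Dr^2 := by
    have h11 : mr^2 * 1 ≤ mr^2 * Dr^2 := mul_le_mul_of_nonneg_left hDr1 (sq_nonneg mr)
    linarith
  have ht7 : t ≤ -7 := by rw [ht]; linarith
  have hdisc : (0:ℝ) ≤ t^2 - 4 := by nlinarith [sq_nonneg (t+7)]
  set sq : ℝ := Real.sqrt (t^2 - 4) with hsq
  have hsq2 : sq^2 = t^2 - 4 := Real.sq_sqrt hdisc
  have hsqnn : 0 ≤ sq := Real.sqrt_nonneg _
  clear_value sq
  set lam : ℝ := (t - sq)/2 with hlam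
  set mu : ℝ := (t + sq)/2 with hmu
  clear_value lam mu
  have hlam_char : lam^2 - t*lam + 1 = 0 := by rw [hlam]; linear_combination hsq2/4
  have hmu_char : mu^2 - t*mu + 1 = 0 := by rw [hmu]; linear_combination hsq2/4
  have hlammu : lam * mu = 1 := by rw [hlam, hmu]; linear_combination -hsq2/4
  have hlam_lt : lam < -1 := by
    rw [hlam]
    have : t - sq ≤ -7 := by linarith
    linarith
  have hlam_abs : 1 < |lam| := lt_of_lt_of_le (by linarith) (neg_le_abs lam)
  have hinv : lam⁻¹ = mu := inv_eq_of_mul_eq_one_right hlammu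
  -- real matrix entries
  set B11 : ℝ := 1 - mr*p*q - mr*r*s - mr^2*Dr*p*s with hB11
  set B12 : ℝ := mr*(p:ℝ)^2 + mr*(r:ℝ)^2 + mr^2*Dr*p*r with hB12
  set B21 : ℝ := -(mr*(q:ℝ)^2) - mr*(s:ℝ)^2 - mr^2*Dr*q*s with hB21
  set B22 : ℝ := 1 + mr*p*q + mr*r*s + mr^2*Dr*q*r with hB22
  clear_value B11 B12 B21 B22
  have hmap : g.map (Int.cast : ℤ → ℝ) = !![B11, B12; B21, B22] := by
    funext i j
    fin_cases i <;> fin_cases j <;>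
      · simp [hg, Matrix.map_apply, hB11, hB12, hB21, hB22, hDrd, hmr, hn]
        try push_cast
        try ring
  have htrB : B11 + B22 = t := by rw [hB11, hB22, ht, hDr]; ring
  have hdetB : B11 * B22 - B12 * B21 = 1 := by rw [hB11, hB22, hB12, hB21, hDr]; ring
  have hchar_a : lam^2 - (!![B11, B12; B21, B22] : Matrix (Fin 2) (Fin 2) ℝ).trace * lam
      + (!![B11, B12; B21, B22] : Matrix (Fin 2) (Fin 2) ℝ).det = 0 := by
    rw [Matrix.trace_fin_two_of, Matrix.det_fin_two_of]
    rw [show B11 * B22 - B12 * B21 = 1 from hdetB]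
    rw [show B11 + B22 = t from htrB]
    exact hlam_char
  have hchar_r : mu^2 - (!![B11, B12; B21, B22] : Matrix (Fin 2) (Fin 2) ℝ).trace * mu
      + (!![B11, B12; B21, B22] : Matrix (Fin 2) (Fin 2) ℝ).det = 0 := by
    rw [Matrix.trace_fin_two_of, Matrix.det_fin_two_of]
    rw [show B11 * B22 - B12 * B21 = 1 from hdetB]
    rw [show B11 + B22 = t from htrB]
    exact hmu_char
  set va : Fin 2 → ℝ := ![B12, lam - B11] with hva_def
  set vv : Fin 2 → ℝ := ![B12, mu - B11] with hvv_def
  have heig_a : (g.map (Int.cast : ℤ → ℝ)).mulVec va = lam • va := by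
    rw [hmap, hva_def]
    have := eigvec !![B11, B12; B21, B22] lam hchar_a
    simpa using this
  have heig_r : (g.map (Int.cast : ℤ → ℝ)).mulVec vv = mu • vv := by
    rw [hmap, hvv_def]
    have := eigvec !![B11, B12; B21, B22] mu hchar_r
    simpa using this
  -- link Φa (1/m) with the eigenvectors
  have hsqeq : Sq (1/mr) = sq * (1/mr^2) := by
    have harg : (T (1/mr))^2 - 4*(1/mr)^4 = (t^2 - 4) * ((1/mr^2))^2 := by
      rw [hT, ht]; field_simp
    rw [hSq]
    simp only
    rw [harg, Real.sqrt_mul hdisc, Real.sqrt_sq (by positivity), hsq]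
  have hlink_a : Φa (1/mr) = (mr^2)⁻¹ • va := by
    rw [hΦa, hva_def]
    funext i
    fin_cases i
    · show A (1/mr) = (mr^2)⁻¹ * B12
      rw [hA, hB12]
      simp only
      field_simp
    · show (T (1/mr) - Sq (1/mr))/2 - B (1/mr) = (mr^2)⁻¹ * (lam - B11)
      rw [hsqeq, hT, hB, hlam, hB11, ht]
      simp only
      field_simp
      ring
  have hlink_r : Φr (1/mr) = (mr^2)⁻¹ • vv := by
    rw [hΦr, hvv_def]
    funext i
    fin_cases i
    · show A (1/mr) = (mr^2)⁻¹ * B12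
      rw [hA, hB12]
      simp only
      field_simp
    · show (T (1/mr) + Sq (1/mr))/2 - B (1/mr) = (mr^2)⁻¹ * (mu - B11)
      rw [hsqeq, hT, hB, hmu, hB11, ht]
      simp only
      field_simp
      ring
  -- memberships
  obtain ⟨hva1, hmemV⟩ := hballV ((mr^2)⁻¹ • va) (by
    rw [← hlink_a, ← hΦa0]
    rw [hmr]
    exact hnearV)
  obtain ⟨hvr1, hmemU⟩ := hballU ((mr^2)⁻¹ • vv) (by
    rw [← hlink_r, ← hΦr0]
    rw [hmr]
    exact hnearU)
  have hva0 : va ≠ 0 := by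
    intro h
    apply hva1
    rw [h, smul_zero]
  have hvv0 : vv ≠ 0 := by
    intro h
    apply hvr1
    rw [h, smul_zero]
  have hmkva : Projectivization.mk ℝ va hva0 = Projectivization.mk ℝ ((mr^2)⁻¹ • va) hva1 := by
    rw [Projectivization.mk_eq_mk_iff']
    refine ⟨mr^2, ?_⟩
    rw [smul_smul, mul_inv_cancel₀ (by positivity), one_smul]
  have hmkvv : Projectivization.mk ℝ vv hvv0 = Projectivization.mk ℝ ((mr^2)⁻¹ • vv) hvr1 := by
    rw [Projectivization.mk_eq_mk_iff']
    refine ⟨mr^2, ?_⟩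
    rw [smul_smul, mul_inv_cancel₀ (by positivity), one_smul]
  refine ⟨g, hdet, htrabs, vv, va, hvv0, hva0, lam, hlam_abs, heig_a, ?_, ?_, ?_⟩
  · rw [hinv]; exact heig_r
  · rw [hmkvv]; exact hmemU
  · rw [hmkva]; exact hmemV
end
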